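/- Let G be a connected d-regular graph on n vertices, e = {1,2} ∈ E(G) with G−e connected, and suppose dist_{G−e}(1,2) < c for a constant c. Then the principal ratio satisfies γ(G−e) < n²(1 + d^c). -/

import Mathlib

open SimpleGraph Matrix Finset

private lemma walk_getVert_mem_support {V : Type*} {G : SimpleGraph V} {u v : V}
    (p : G.Walk u v) (k : ℕ) : p.getVert k ∈ p.support := by
  induction p generalizing k with
  | nil =>
    rw [SimpleGraph.Walk.getVert_of_length_le _ (by simp)]
    simp
  | cons h p ih =>
    cases k with
    | zero => simp [SimpleGraph.Walk.getVert_zero]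
    | succ k =>
      simp only [SimpleGraph.Walk.support_cons, List.mem_cons]
      exact Or.inr (ih k)

private lemma path_getVert_injOn {V : Type*} {G : SimpleGraph V} {u v : V}
    {p : G.Walk u v} (hp : p.IsPath) :
    ∀ k l, k ≤ p.length → l ≤ p.length → p.getVert k = p.getVert l → k = l := by
  induction p with
  | nil =>
    intro k l hk hl _
    simp only [SimpleGraph.Walk.length_nil, Nat.le_zero] at hk hl
    omega
  | cons h p ih =>
    rw [SimpleGraph.Walk.cons_isPath_iff] at hp
    intro k l hk hl he
    match k, l with
    | 0, 0 => rfl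
    | 0, l + 1 =>
      exfalso
      apply hp.2
      have h0 : (SimpleGraph.Walk.cons h p).getVert 0 = _ := SimpleGraph.Walk.getVert_zero _
      rw [h0] at he
      rw [he]
      exact walk_getVert_mem_support p l
    | k + 1, 0 =>
      exfalso
      apply hp.2
      have h0 : (SimpleGraph.Walk.cons h p).getVert 0 = _ := SimpleGraph.Walk.getVert_zero _
      rw [h0] at he
      rw [← he]
      exact walk_getVert_mem_support p k
    | k + 1, l + 1 =>
      have : k = l := by
        apply ih hp.1 k l
        · simpa [SimpleGraph.Walk.length_cons] using hk
        · simpa [SimpleGraph.Walk.length_cons] using hl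
        · simpa [SimpleGraph.Walk.getVert_cons_succ] using he
      omega

set_option maxHeartbeats 2000000 in
/-- Let `G` be a connected `d`-regular graph on `n` vertices, `e = {a,b}` an edge with
`G − e` connected, and suppose `dist_{G−e}(a,b) < c`. Then the principal ratio of
`G − e` satisfies `γ(G−e) < n² (1 + d^c)`. -/
theorem stmt_14 {n d c : ℕ} (G : SimpleGraph (Fin n)) [DecidableRel G.Adj] (hG : G.Connected)
    (hreg : G.IsRegularOfDegree d) (a b : Fin n) (hab : G.Adj a b)
    [DecidableRel (G.deleteEdges {s(a, b)}).Adj]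
    (hconn : (G.deleteEdges {s(a, b)}).Connected)
    (hdist : (G.deleteEdges {s(a, b)}).dist a b < c)
    (μ : ℝ) (q : Fin n → ℝ) (hpos : ∀ w, 0 < q w)
    (heig : (G.deleteEdges {s(a, b)}).adjMatrix ℝ *ᵥ q = μ • q) :
    ∀ i j : Fin n, q i / q j < (n : ℝ) ^ 2 * (1 + (d : ℝ) ^ c) := by
  classical
  intro i j
  have hne : a ≠ b := hab.ne
  have hn2 : (2 : ℝ) ≤ (n : ℝ) := by
    have h1 : 1 < Fintype.card (Fin n) := Fintype.one_lt_card_iff_nontrivial.2 ⟨⟨a, b, hne⟩⟩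
    have : 2 ≤ n := by simp at h1; omega
    exact_mod_cast this
  have hd1 : 1 ≤ d := by
    have hdeg : G.degree a = d := hreg a
    have h0 : 0 < G.degree a := (G.degree_pos_iff_exists_adj a).2 ⟨b, hab⟩
    omega
  have hd1' : (1 : ℝ) ≤ (d : ℝ) := by exact_mod_cast hd1
  -- basic matrix facts
  have hA0 : ∀ v w, 0 ≤ (G.deleteEdges {s(a, b)}).adjMatrix ℝ v w := by
    intro v w
    rw [SimpleGraph.adjMatrix_apply]
    split <;> norm_num
  have hA1 : ∀ v w, (G.deleteEdges {s(a, b)}).Adj v w →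
      (G.deleteEdges {s(a, b)}).adjMatrix ℝ v w = 1 := by
    intro v w h
    rw [SimpleGraph.adjMatrix_apply, if_pos h]
  have hAsymm : ∀ v w, (G.deleteEdges {s(a, b)}).adjMatrix ℝ v w
      = (G.deleteEdges {s(a, b)}).adjMatrix ℝ w v := by
    intro v w
    rw [SimpleGraph.adjMatrix_apply, SimpleGraph.adjMatrix_apply]
    simp [SimpleGraph.adj_comm]
  have heig' : ∀ v, ∑ w, (G.deleteEdges {s(a, b)}).adjMatrix ℝ v w * q w = μ * q v := by
    intro v
    have := congrFun heig v
    simp only [Matrix.mulVec, dotProduct, Pi.smul_apply, smul_eq_mul] at this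
    exact this
  -- relation between adjacency matrices of G and H
  have hsplit : ∀ v w, (G.adjMatrix ℝ) v w
      = (G.deleteEdges {s(a, b)}).adjMatrix ℝ v w
        + (if (v = a ∧ w = b) ∨ (v = b ∧ w = a) then (1 : ℝ) else 0) := by
    intro v w
    by_cases hvw : (v = a ∧ w = b) ∨ (v = b ∧ w = a)
    · have hH : ¬ (G.deleteEdges {s(a, b)}).Adj v w := by
        rw [SimpleGraph.deleteEdges_adj]
        rintro ⟨-, hmem⟩
        apply hmem
        simp only [Set.mem_singleton_iff, Sym2.eq_iff]
        tauto
      have hGadj : G.Adj v w := by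
        rcases hvw with ⟨rfl, rfl⟩ | ⟨rfl, rfl⟩
        · exact hab
        · exact hab.symm
      simp [SimpleGraph.adjMatrix_apply, hGadj, hH, hvw]
    · have hiff : (G.deleteEdges {s(a, b)}).Adj v w ↔ G.Adj v w := by
        rw [SimpleGraph.deleteEdges_adj]
        constructor
        · exact fun h => h.1
        · intro h
          refine ⟨h, ?_⟩
          simp only [Set.mem_singleton_iff, Sym2.eq_iff]
          tauto
      rw [SimpleGraph.adjMatrix_apply, SimpleGraph.adjMatrix_apply, if_neg hvw, add_zero]
      by_cases h : G.Adj v w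
      · rw [if_pos h, if_pos (hiff.2 h)]
      · rw [if_neg h, if_neg (fun hh => h (hiff.1 hh))]
  -- make the adjacency matrix opaque
  obtain ⟨A, hAeq⟩ : ∃ A' : Matrix (Fin n) (Fin n) ℝ,
      (G.deleteEdges {s(a, b)}).adjMatrix ℝ = A' := ⟨_, rfl⟩
  rw [hAeq] at heig' hA0 hA1 hAsymm hsplit
  -- row sums
  have hrowG : ∀ v, ∑ w, (G.adjMatrix ℝ) v w = (d : ℝ) := by
    intro v
    have h1 : ∑ w, (G.adjMatrix ℝ) v w = ((G.neighborFinset v).card : ℝ) := by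
      rw [SimpleGraph.neighborFinset_eq_filter]
      simp [SimpleGraph.adjMatrix_apply, Finset.sum_boole]
    rw [h1]
    have := hreg v
    rw [SimpleGraph.degree] at this
    rw [this]
  have hInd : ∀ v : Fin n,
      ∑ w, (if (v = a ∧ w = b) ∨ (v = b ∧ w = a) then (1 : ℝ) else 0)
        = (if v = a ∨ v = b then (1 : ℝ) else 0) := by
    intro v
    by_cases hva : v = a
    · subst hva
      simp [hne]
    · by_cases hvb : v = b
      · subst hvb
        simp [hva, Ne.symm hne]
      · simp [hva, hvb]
  have hrowA : ∀ v, ∑ w, A v w = (d : ℝ) - (if v = a ∨ v = b then (1 : ℝ) else 0) := by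
    intro v
    have h1 := hrowG v
    rw [Finset.sum_congr rfl (fun w _ => hsplit v w), Finset.sum_add_distrib, hInd v] at h1
    linarith
  have hrowA_le : ∀ v, ∑ w, A v w ≤ (d : ℝ) := by
    intro v
    rw [hrowA]
    split <;> norm_num
  -- maximum of q
  obtain ⟨u, -, hMax⟩ := Finset.exists_max_image Finset.univ q ⟨a, Finset.mem_univ a⟩
  set M := q u with hMdef
  have hM : ∀ v, q v ≤ M := fun v => hMax v (Finset.mem_univ v)
  have hM0 : 0 < M := hpos u
  -- μ ≤ d
  have hmu_le : μ ≤ (d : ℝ) := by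
    have h1 : μ * M = ∑ w, A u w * q w := (heig' u).symm
    have h2 : ∑ w, A u w * q w ≤ ∑ w, A u w * M :=
      Finset.sum_le_sum fun w _ => mul_le_mul_of_nonneg_left (hM w) (hA0 u w)
    have h3 : ∑ w, A u w * M = (∑ w, A u w) * M := by rw [Finset.sum_mul]
    nlinarith [hrowA_le u]
  -- μ ≥ 0
  have hmu0 : 0 ≤ μ := by
    have h1 : (0 : ℝ) ≤ ∑ w, A u w * q w :=
      Finset.sum_nonneg fun w _ => mul_nonneg (hA0 _ _) (hpos w).le
    rw [heig' u] at h1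
    nlinarith
  clear_value M
  -- sum identity
  set S := ∑ v, q v with hSdef
  have hS0 : 0 < S :=
    Finset.sum_pos (fun v _ => hpos v) ⟨a, Finset.mem_univ a⟩
  clear_value S
  have hkey : ((d : ℝ) - μ) * S = q a + q b := by
    have h1 : ∑ v, μ * q v = ∑ v, ∑ w, A v w * q w :=
      (Finset.sum_congr rfl fun v _ => (heig' v).symm)
    rw [Finset.sum_comm] at h1
    have h2 : ∀ w : Fin n, ∑ v, A v w * q w = ((d : ℝ) - (if w = a ∨ w = b then (1:ℝ) else 0)) * q w := by
      intro w
      rw [← Finset.sum_mul]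
      congr 1
      rw [← hrowA w]
      exact Finset.sum_congr rfl fun v _ => hAsymm v w
    rw [Finset.sum_congr rfl (fun w _ => h2 w)] at h1
    have h3 : ∑ w, ((d : ℝ) - (if w = a ∨ w = b then (1:ℝ) else 0)) * q w
        = (d : ℝ) * S - (q a + q b) := by
      have h4 : ∀ w : Fin n, ((d : ℝ) - (if w = a ∨ w = b then (1:ℝ) else 0)) * q w
          = (d : ℝ) * q w - ((if w = a then q w else 0) + (if w = b then q w else 0)) := by
        intro w
        by_cases h1' : w = a
        · subst h1'
          rw [if_pos (Or.inl rfl), if_pos rfl, if_neg hne]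
          ring
        · by_cases h2' : w = b
          · subst h2'
            rw [if_pos (Or.inr rfl), if_neg h1', if_pos rfl]
            ring
          · rw [if_neg (by tauto), if_neg h1', if_neg h2']
            ring
      rw [Finset.sum_congr rfl (fun w _ => h4 w), Finset.sum_sub_distrib, Finset.sum_add_distrib]
      simp [hSdef, Finset.mul_sum]
    rw [h3] at h1
    have h5 : ∑ v, μ * q v = μ * S := by rw [hSdef, Finset.mul_sum]
    rw [h5] at h1
    linarith
  have hpab : 0 < q a + q b := add_pos (hpos a) (hpos b)
  have hmud : μ < (d : ℝ) := by nlinarith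
  -- minimum is attained at a or b
  set m := min (q a) (q b) with hmdef
  have hm0 : 0 < m := lt_min (hpos a) (hpos b)
  have hmin : ∀ v, m ≤ q v := by
    obtain ⟨v0, -, hv0⟩ := Finset.exists_min_image Finset.univ q ⟨a, Finset.mem_univ a⟩
    have hv0' : ∀ v, q v0 ≤ q v := fun v => hv0 v (Finset.mem_univ v)
    intro v
    rcases le_or_gt m (q v0) with h | h
    · exact le_trans h (hv0' v)
    · exfalso
      have hva : v0 ≠ a := by
        intro hh; rw [hh] at h
        exact absurd (min_le_left (q a) (q b)) (not_le.2 h)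
      have hvb : v0 ≠ b := by
        intro hh; rw [hh] at h
        exact absurd (min_le_right (q a) (q b)) (not_le.2 h)
      have hrow : ∑ w, A v0 w = (d : ℝ) := by
        rw [hrowA]
        simp [hva, hvb]
      have h1 : ∑ w, A v0 w * q v0 ≤ ∑ w, A v0 w * q w :=
        Finset.sum_le_sum fun w _ => mul_le_mul_of_nonneg_left (hv0' w) (hA0 v0 w)
      rw [heig' v0, ← Finset.sum_mul, hrow] at h1
      have hq0 : 0 < q v0 := hpos v0
      nlinarith
  clear_value m
  -- walk bounds
  have hstep : ∀ x y : Fin n, (G.deleteEdges {s(a, b)}).Adj x y → q y ≤ μ * q x := by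
    intro x y hxy
    have h1 : A x y * q y ≤ ∑ w, A x w * q w :=
      Finset.single_le_sum (f := fun w => A x w * q w)
        (fun w _ => mul_nonneg (hA0 _ _) (hpos w).le) (Finset.mem_univ y)
    rw [hA1 x y hxy, one_mul, heig' x] at h1
    exact h1
  have hwalk : ∀ (x y : Fin n) (w : (G.deleteEdges {s(a, b)}).Walk x y), q y ≤ μ ^ w.length * q x := by
    intro x y w
    induction w with
    | nil => simp
    | @cons x' z' y' hadj p ih =>
      calc q y' ≤ μ ^ p.length * q z' := ih
        _ ≤ μ ^ p.length * (μ * q x') :=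
            mul_le_mul_of_nonneg_left (hstep _ _ hadj) (pow_nonneg hmu0 _)
        _ = μ ^ (SimpleGraph.Walk.cons hadj p).length * q x' := by
            rw [SimpleGraph.Walk.length_cons]
            ring
  -- bounds between q a and q b
  set K := (d : ℝ) ^ (c - 1) with hKdef
  have hK1 : (1 : ℝ) ≤ K := one_le_pow₀ hd1'
  have hmuK : ∀ k : ℕ, k ≤ c - 1 → μ ^ k ≤ K := by
    intro k hk
    calc μ ^ k ≤ (d : ℝ) ^ k := pow_le_pow_left₀ hmu0 hmu_le k
      _ ≤ K := pow_le_pow_right₀ hd1' hk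
  have hKc : K ≤ (d : ℝ) ^ c := pow_le_pow_right₀ hd1' (by omega)
  clear_value K
  have hdistba : (G.deleteEdges {s(a, b)}).dist b a < c := by
    rw [SimpleGraph.dist_comm]
    exact hdist
  have hKab : q b ≤ K * q a := by
    obtain ⟨w, hw⟩ := hconn.exists_walk_length_eq_dist a b
    calc q b ≤ μ ^ w.length * q a := hwalk a b w
      _ ≤ K * q a := by
          apply mul_le_mul_of_nonneg_right _ (hpos a).le
          apply hmuK
          omega
  have hKba : q a ≤ K * q b := by
    obtain ⟨w, hw⟩ := hconn.exists_walk_length_eq_dist b a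
    calc q a ≤ μ ^ w.length * q b := hwalk b a w
      _ ≤ K * q b := by
          apply mul_le_mul_of_nonneg_right _ (hpos b).le
          apply hmuK
          omega
  have hqam : q a ≤ K * m := by
    rcases le_total (q a) (q b) with h | h
    · rw [hmdef, min_eq_left h]
      nlinarith
    · rw [hmdef, min_eq_right h]
      exact hKba
  have hpm : q a + q b ≤ (1 + K) * m := by
    rcases le_total (q a) (q b) with h | h
    · rw [hmdef, min_eq_left h]
      nlinarith
    · rw [hmdef, min_eq_right h]
      nlinarith
  -- quadratic form bound
  set Q2 := ∑ v, q v ^ 2 with hQ2def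
  clear_value Q2
  have hQ2M : Q2 ≤ M * S := by
    rw [hQ2def, hSdef, Finset.mul_sum]
    apply Finset.sum_le_sum
    intro v _
    have := hM v
    nlinarith [hpos v]
  have hquad : ∑ v, ∑ w, A v w * (q v - q w) ^ 2 ≤ 2 * (((d : ℝ) - μ) * Q2) := by
    have hsum1 : ∑ v, ∑ w, A v w * q v ^ 2 ≤ (d : ℝ) * Q2 := by
      rw [hQ2def, Finset.mul_sum]
      apply Finset.sum_le_sum
      intro v _
      have h1 : ∑ w, A v w * q v ^ 2 = (∑ w, A v w) * q v ^ 2 := by rw [Finset.sum_mul]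
      rw [h1]
      exact mul_le_mul_of_nonneg_right (hrowA_le v) (sq_nonneg _)
    have hsum3 : ∑ v, ∑ w, A v w * q w ^ 2 ≤ (d : ℝ) * Q2 := by
      rw [Finset.sum_comm]
      rw [hQ2def, Finset.mul_sum]
      apply Finset.sum_le_sum
      intro w _
      have h1 : ∑ v, A v w * q w ^ 2 = (∑ v, A v w) * q w ^ 2 := by rw [Finset.sum_mul]
      have h2 : ∑ v, A v w = ∑ v, A w v := Finset.sum_congr rfl fun v _ => hAsymm v w
      rw [h1, h2]
      exact mul_le_mul_of_nonneg_right (hrowA_le w) (sq_nonneg _)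
    have hsum2 : ∑ v, ∑ w, q v * (A v w * q w) = μ * Q2 := by
      have h1 : ∀ v : Fin n, ∑ w, q v * (A v w * q w) = q v * (μ * q v) := by
        intro v
        rw [← Finset.mul_sum, heig' v]
      rw [Finset.sum_congr rfl (fun v _ => h1 v), hQ2def, Finset.mul_sum]
      apply Finset.sum_congr rfl
      intro v _
      ring
    have hexp : ∑ v, ∑ w, A v w * (q v - q w) ^ 2
        = (∑ v, ∑ w, A v w * q v ^ 2) - 2 * (∑ v, ∑ w, q v * (A v w * q w))
          + (∑ v, ∑ w, A v w * q w ^ 2) := by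
      rw [Finset.mul_sum, ← Finset.sum_sub_distrib, ← Finset.sum_add_distrib]
      apply Finset.sum_congr rfl
      intro v _
      rw [Finset.mul_sum, ← Finset.sum_sub_distrib, ← Finset.sum_add_distrib]
      apply Finset.sum_congr rfl
      intro w _
      ring
    rw [hexp, hsum2]
    linarith
  -- path from u to a
  obtain ⟨wua⟩ := hconn.preconnected u a
  obtain ⟨p, hp⟩ : ∃ p : (G.deleteEdges {s(a, b)}).Walk u a, p.IsPath :=
    ⟨wua.toPath.val, wua.toPath.property⟩
  set L := p.length with hLdef
  have hLn : (L : ℝ) ≤ (n : ℝ) - 1 := by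
    have h1 : L < Fintype.card (Fin n) := hp.length_lt
    rw [Fintype.card_fin] at h1
    have : (L : ℝ) + 1 ≤ (n : ℝ) := by exact_mod_cast h1
    linarith
  clear_value L
  have htel : ∑ k ∈ Finset.range L, (q (p.getVert k) - q (p.getVert (k + 1))) = M - q a := by
    rw [Finset.sum_range_sub' (fun k => q (p.getVert k))]
    rw [hLdef, SimpleGraph.Walk.getVert_zero, SimpleGraph.Walk.getVert_length, hMdef]
  have hCS : (M - q a) ^ 2
      ≤ (L : ℝ) * ∑ k ∈ Finset.range L, (q (p.getVert k) - q (p.getVert (k + 1))) ^ 2 := by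
    rw [← htel]
    have := sq_sum_le_card_mul_sum_sq
      (s := Finset.range L) (f := fun k => q (p.getVert k) - q (p.getVert (k + 1)))
    simpa using this
  have hpathsum : ∑ k ∈ Finset.range L, (q (p.getVert k) - q (p.getVert (k + 1))) ^ 2
      ≤ ∑ v, ∑ w, A v w * (q v - q w) ^ 2 := by
    have hterm : ∀ k ∈ Finset.range L,
        (q (p.getVert k) - q (p.getVert (k + 1))) ^ 2
          = (fun vw : Fin n × Fin n => A vw.1 vw.2 * (q vw.1 - q vw.2) ^ 2)
              (p.getVert k, p.getVert (k + 1)) := by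
      intro k hk
      have hk' : k < p.length := by rw [← hLdef]; exact Finset.mem_range.mp hk
      have hadj : (G.deleteEdges {s(a, b)}).Adj (p.getVert k) (p.getVert (k + 1)) :=
        p.adj_getVert_succ hk'
      simp only
      rw [hA1 _ _ hadj, one_mul]
    have hinj' : ∀ x ∈ Finset.range L, ∀ y ∈ Finset.range L,
        (p.getVert x, p.getVert (x + 1)) = (p.getVert y, p.getVert (y + 1)) → x = y := by
      intro x hx y hy hxy
      have h1 : p.getVert x = p.getVert y := (Prod.mk.injEq _ _ _ _).mp hxy |>.1
      have hx' : x < p.length := by rw [← hLdef]; exact Finset.mem_range.mp hx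
      have hy' : y < p.length := by rw [← hLdef]; exact Finset.mem_range.mp hy
      exact path_getVert_injOn hp x y (le_of_lt hx') (le_of_lt hy') h1
    have hQnn : ∀ vw : Fin n × Fin n, vw ∈ Finset.univ →
        vw ∉ (Finset.range L).image (fun k => (p.getVert k, p.getVert (k + 1))) →
        0 ≤ (fun vw : Fin n × Fin n => A vw.1 vw.2 * (q vw.1 - q vw.2) ^ 2) vw :=
      fun vw _ _ => mul_nonneg (hA0 _ _) (sq_nonneg _)
    calc ∑ k ∈ Finset.range L, (q (p.getVert k) - q (p.getVert (k + 1))) ^ 2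
        = ∑ k ∈ Finset.range L, (fun vw : Fin n × Fin n => A vw.1 vw.2 * (q vw.1 - q vw.2) ^ 2)
            (p.getVert k, p.getVert (k + 1)) := Finset.sum_congr rfl hterm
      _ = ∑ vw ∈ (Finset.range L).image (fun k => (p.getVert k, p.getVert (k + 1))),
            (fun vw : Fin n × Fin n => A vw.1 vw.2 * (q vw.1 - q vw.2) ^ 2) vw :=
          (Finset.sum_image (g := fun k => (p.getVert k, p.getVert (k + 1)))
            (f := fun vw : Fin n × Fin n => A vw.1 vw.2 * (q vw.1 - q vw.2) ^ 2) hinj').symm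
      _ ≤ ∑ vw : Fin n × Fin n,
            (fun vw : Fin n × Fin n => A vw.1 vw.2 * (q vw.1 - q vw.2) ^ 2) vw :=
          Finset.sum_le_sum_of_subset_of_nonneg (Finset.subset_univ _) hQnn
      _ = ∑ v, ∑ w, A v w * (q v - q w) ^ 2 := Fintype.sum_prod_type _
  have hmain : (M - q a) ^ 2 ≤ 2 * ((n : ℝ) - 1) * ((q a + q b) * M) := by
    have h1 : (M - q a) ^ 2 ≤ (L : ℝ) * (2 * (((d : ℝ) - μ) * Q2)) := by
      calc (M - q a) ^ 2 ≤ (L : ℝ) * ∑ k ∈ Finset.range L,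
            (q (p.getVert k) - q (p.getVert (k + 1))) ^ 2 := hCS
        _ ≤ (L : ℝ) * (2 * (((d : ℝ) - μ) * Q2)) := by
            apply mul_le_mul_of_nonneg_left (le_trans hpathsum hquad) (Nat.cast_nonneg L)
    have h2 : ((d : ℝ) - μ) * Q2 ≤ (q a + q b) * M := by
      have h3 : ((d : ℝ) - μ) * Q2 ≤ ((d : ℝ) - μ) * (M * S) :=
        mul_le_mul_of_nonneg_left hQ2M (by linarith)
      calc ((d : ℝ) - μ) * Q2 ≤ ((d : ℝ) - μ) * (M * S) := h3
        _ = (((d : ℝ) - μ) * S) * M := by ring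
        _ = (q a + q b) * M := by rw [hkey]
    have hQ2nn : (0 : ℝ) ≤ Q2 := by
      rw [hQ2def]
      exact Finset.sum_nonneg fun v _ => sq_nonneg _
    calc (M - q a) ^ 2 ≤ (L : ℝ) * (2 * (((d : ℝ) - μ) * Q2)) := h1
      _ ≤ ((n : ℝ) - 1) * (2 * (((d : ℝ) - μ) * Q2)) := by
          apply mul_le_mul_of_nonneg_right hLn
          have : (0 : ℝ) ≤ (d : ℝ) - μ := by linarith
          positivity
      _ ≤ ((n : ℝ) - 1) * (2 * ((q a + q b) * M)) := by
          apply mul_le_mul_of_nonneg_left (by linarith) (by linarith)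
      _ = 2 * ((n : ℝ) - 1) * ((q a + q b) * M) := by ring
  -- final bound on M
  have hgoal : M < (n : ℝ) ^ 2 * (1 + (d : ℝ) ^ c) * m := by
    by_cases hcase : M < (n : ℝ) ^ 2 * q a
    · have h1 : (n : ℝ) ^ 2 * q a ≤ (n : ℝ) ^ 2 * (K * m) :=
        mul_le_mul_of_nonneg_left hqam (by positivity)
      have h2 : K * m ≤ (d : ℝ) ^ c * m := mul_le_mul_of_nonneg_right hKc hm0.le
      nlinarith [sq_nonneg (n : ℝ)]
    · push_neg at hcase
      have hn4 : (4 : ℝ) ≤ (n : ℝ) ^ 2 := by nlinarith [hn2]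
      have h4 : 4 * q a ≤ M := by
        have := mul_le_mul_of_nonneg_right hn4 (hpos a).le
        linarith
      have hfac : 0 ≤ (M - 4 * q a) * (7 * M - 4 * q a) :=
        mul_nonneg (by linarith) (by nlinarith [hpos a])
      have h9 : 9 * M ≤ 32 * ((n : ℝ) - 1) * (q a + q b) := by
        nlinarith [hmain, hM0]
      have hRm : q a + q b ≤ (1 + (d : ℝ) ^ c) * m := by nlinarith
      have h10 : 9 * M ≤ 32 * ((n : ℝ) - 1) * ((1 + (d : ℝ) ^ c) * m) := by
        calc 9 * M ≤ 32 * ((n : ℝ) - 1) * (q a + q b) := h9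
          _ ≤ 32 * ((n : ℝ) - 1) * ((1 + (d : ℝ) ^ c) * m) :=
              mul_le_mul_of_nonneg_left hRm (by linarith)
      have h32 : 32 * ((n : ℝ) - 1) < 9 * (n : ℝ) ^ 2 := by
        nlinarith [sq_nonneg (3 * (n : ℝ) - 16 / 3)]
      have hX : 0 < (1 + (d : ℝ) ^ c) * m := by positivity
      nlinarith [mul_lt_mul_of_pos_right h32 hX]
  -- conclude
  rw [div_lt_iff₀ (hpos j)]
  calc q i ≤ M := hM i
    _ < (n : ℝ) ^ 2 * (1 + (d : ℝ) ^ c) * m := hgoal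
    _ ≤ (n : ℝ) ^ 2 * (1 + (d : ℝ) ^ c) * q j := by
        apply mul_le_mul_of_nonneg_left (hmin j) (by positivity)
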